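/- arXiv:2203.08524 — 4 statements merged into one kernel-verified Lean document; each statement's English description precedes it below -/
import Mathlib

section
/- (Krein–Milman type decomposition for types) Let 𝒜 be a finite set, ξ a probability distribution on 𝒜, and ℓ ≥ 1 an integer. Define Π(ξ, ℓ) = {V probability distribution on 𝒜 : ⌊ℓξ_j⌋/ℓ ≤ V(j) ≤ ⌈ℓξ_j⌉/ℓ for all j}. Then there exist K ≤ 2^{|𝒜|} empirical distributions P^{(1)}, …, P^{(K)} of denominator ℓ (types of order ℓ) in Π(ξ, ℓ) such that every P ∈ Π(ξ, ℓ), in particular ξ itself, is a convex combination of P^{(1)}, …, P^{(K)}. -/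
open Finset

open scoped Classical in
/-- The set of coordinates where `ℓ * V j` is not an integer. -/
noncomputable def frSet {A : Type} [Fintype A] (ℓ : ℕ) (V : A → ℝ) : Finset A :=
  Finset.univ.filter (fun j => ∀ m : ℤ, (ℓ : ℝ) * V j ≠ m)

lemma frSet_mem {A : Type} [Fintype A] (ℓ : ℕ) (V : A → ℝ) (j : A) :
    j ∈ frSet ℓ V ↔ ∀ m : ℤ, (ℓ : ℝ) * V j ≠ m := by
  classical
  simp [frSet]

lemma core_base {A : Type} [Fintype A] (ℓ : ℕ) (hℓ : 1 ≤ ℓ) (a b : A → ℤ)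
    (hab : ∀ j, b j ≤ a j + 1)
    (V : A → ℝ) (hbox : ∀ j, (a j : ℝ) / ℓ ≤ V j ∧ V j ≤ (b j : ℝ) / ℓ)
    (hfr : frSet ℓ V = ∅) :
    ∀ j, V j = (a j : ℝ) / ℓ ∨ V j = (b j : ℝ) / ℓ := by
  have hℓR : (0 : ℝ) < ℓ := by exact_mod_cast hℓ
  intro j
  have hj : ¬ (∀ m : ℤ, (ℓ : ℝ) * V j ≠ m) := by
    intro h
    have : j ∈ frSet ℓ V := (frSet_mem ℓ V j).mpr h
    simp [hfr] at this
  push_neg at hj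
  obtain ⟨m, hm⟩ := hj
  have hV : V j = (m : ℝ) / ℓ := by
    field_simp
    linarith [hm]
  have h1 : (a j : ℝ) ≤ (m : ℝ) := by
    have := (hbox j).1
    rw [hV] at this
    exact (div_le_div_iff_of_pos_right hℓR).mp this
  have h2 : (m : ℝ) ≤ (b j : ℝ) := by
    have := (hbox j).2
    rw [hV] at this
    exact (div_le_div_iff_of_pos_right hℓR).mp this
  have h1' : a j ≤ m := by exact_mod_cast h1
  have h2' : m ≤ b j := by exact_mod_cast h2
  have hba := hab j
  have : m = a j ∨ m = b j := by omega
  rcases this with h | h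
  · left; rw [hV, h]
  · right; rw [hV, h]

lemma core {A : Type} [Fintype A] (ℓ : ℕ) (hℓ : 1 ≤ ℓ) (a b : A → ℤ)
    (hab : ∀ j, b j ≤ a j + 1)
    (E : Set (A → ℝ))
    (hE : ∀ W : A → ℝ, (∀ j, W j = (a j : ℝ) / ℓ ∨ W j = (b j : ℝ) / ℓ) →
      (∑ j, W j = 1) → W ∈ E) :
    ∀ n : ℕ, ∀ V : A → ℝ, (∀ j, (a j : ℝ) / ℓ ≤ V j ∧ V j ≤ (b j : ℝ) / ℓ) →
      (∑ j, V j = 1) → (frSet ℓ V).card ≤ n → V ∈ convexHull ℝ E := by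
  classical
  have hℓR : (0 : ℝ) < ℓ := by exact_mod_cast hℓ
  intro n
  induction n with
  | zero =>
    intro V hbox hsum hcard
    have hfr : frSet ℓ V = ∅ := Finset.card_eq_zero.mp (Nat.le_zero.mp hcard)
    exact subset_convexHull ℝ E (hE V (core_base ℓ hℓ a b hab V hbox hfr) hsum)
  | succ n ih =>
    intro V hbox hsum hcard
    by_cases hfr : frSet ℓ V = ∅
    · exact subset_convexHull ℝ E (hE V (core_base ℓ hℓ a b hab V hbox hfr) hsum)
    · obtain ⟨j1, hj1⟩ := Finset.nonempty_iff_ne_empty.mpr hfr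
      have hj1' : ∀ m : ℤ, (ℓ : ℝ) * V j1 ≠ m := (frSet_mem ℓ V j1).mp hj1
      -- there is a second fractional coordinate
      have hex2 : ∃ j2, j2 ≠ j1 ∧ (∀ m : ℤ, (ℓ : ℝ) * V j2 ≠ m) := by
        by_contra hc
        push_neg at hc
        choose m hm using hc
        set M : A → ℤ := fun j => if h : j = j1 then 0 else m j h with hM
        have hm' : ∀ j, j ≠ j1 → (ℓ : ℝ) * V j = M j := by
          intro j hj
          simp only [hM, dif_neg hj]
          exact hm j hj
        have htot : ∑ j, (ℓ : ℝ) * V j = ℓ := by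
          rw [← Finset.mul_sum, hsum, mul_one]
        have hsplit : (ℓ : ℝ) * V j1 + ∑ j ∈ Finset.univ.erase j1, (ℓ : ℝ) * V j
            = ∑ j, (ℓ : ℝ) * V j :=
          Finset.add_sum_erase Finset.univ (fun j => (ℓ : ℝ) * V j) (Finset.mem_univ j1)
        have herase : ∑ j ∈ Finset.univ.erase j1, (ℓ : ℝ) * V j
            = ∑ j ∈ Finset.univ.erase j1, ((M j : ℤ) : ℝ) :=
          Finset.sum_congr rfl (fun j hj => hm' j (Finset.ne_of_mem_erase hj))
        apply hj1' ((ℓ : ℤ) - ∑ j ∈ Finset.univ.erase j1, M j)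
        push_cast
        linarith [hsplit, htot, herase]
      obtain ⟨j2, hj2ne, hj2'⟩ := hex2
      have hj2 : j2 ∈ frSet ℓ V := (frSet_mem ℓ V j2).mpr hj2'
      -- strict inequalities at fractional coordinates
      have hfrac : ∀ j, (∀ m : ℤ, (ℓ : ℝ) * V j ≠ m) →
          (a j : ℝ) / ℓ < V j ∧ V j < (b j : ℝ) / ℓ := by
        intro j hj
        constructor
        · rcases lt_or_eq_of_le (hbox j).1 with h | h
          · exact h
          · exfalso; apply hj (a j); rw [← h]; field_simp
        · rcases lt_or_eq_of_le (hbox j).2 with h | h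
          · exact h
          · exfalso; apply hj (b j); rw [h]; field_simp
      have hf1 := hfrac j1 hj1'
      have hf2 := hfrac j2 hj2'
      have hne12 : j1 ≠ j2 := Ne.symm hj2ne
      obtain ⟨t1, ht1pos, ht1a, ht1b, ht1eq⟩ :
          ∃ t1 : ℝ, 0 < t1 ∧ t1 ≤ (b j1 : ℝ) / ℓ - V j1 ∧ t1 ≤ V j2 - (a j2 : ℝ) / ℓ ∧
            (t1 = (b j1 : ℝ) / ℓ - V j1 ∨ t1 = V j2 - (a j2 : ℝ) / ℓ) := by
        refine ⟨min ((b j1 : ℝ) / ℓ - V j1) (V j2 - (a j2 : ℝ) / ℓ),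
          lt_min (by linarith [hf1.2]) (by linarith [hf2.1]),
          min_le_left _ _, min_le_right _ _, ?_⟩
        rcases le_total ((b j1 : ℝ) / ℓ - V j1) (V j2 - (a j2 : ℝ) / ℓ) with h | h
        · exact Or.inl (min_eq_left h)
        · exact Or.inr (min_eq_right h)
      obtain ⟨t2, ht2pos, ht2a, ht2b, ht2eq⟩ :
          ∃ t2 : ℝ, 0 < t2 ∧ t2 ≤ V j1 - (a j1 : ℝ) / ℓ ∧ t2 ≤ (b j2 : ℝ) / ℓ - V j2 ∧
            (t2 = V j1 - (a j1 : ℝ) / ℓ ∨ t2 = (b j2 : ℝ) / ℓ - V j2) := by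
        refine ⟨min (V j1 - (a j1 : ℝ) / ℓ) ((b j2 : ℝ) / ℓ - V j2),
          lt_min (by linarith [hf1.1]) (by linarith [hf2.2]),
          min_le_left _ _, min_le_right _ _, ?_⟩
        rcases le_total (V j1 - (a j1 : ℝ) / ℓ) ((b j2 : ℝ) / ℓ - V j2) with h | h
        · exact Or.inl (min_eq_left h)
        · exact Or.inr (min_eq_right h)
      set Z : ℝ → A → ℝ := fun t j =>
        V j + (if j = j1 then t else 0) - (if j = j2 then t else 0) with hZdef
      have hZ1 : ∀ t, Z t j1 = V j1 + t := by
        intro t; simp [hZdef, hne12]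
      have hZ2 : ∀ t, Z t j2 = V j2 - t := by
        intro t; simp [hZdef, hj2ne]
      have hZo : ∀ t j, j ≠ j1 → j ≠ j2 → Z t j = V j := by
        intro t j h1 h2; simp [hZdef, h1, h2]
      have hZsum : ∀ t, ∑ j, Z t j = 1 := by
        intro t
        simp only [hZdef, Finset.sum_sub_distrib, Finset.sum_add_distrib, hsum,
          Finset.sum_ite_eq', Finset.mem_univ, if_true]
        ring
      have hstep : ∀ (t : ℝ) (jstar : A), jstar ∈ frSet ℓ V →
          (∃ m : ℤ, (ℓ : ℝ) * Z t jstar = m) →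
          (∀ j, (a j : ℝ) / ℓ ≤ Z t j ∧ Z t j ≤ (b j : ℝ) / ℓ) →
          Z t ∈ convexHull ℝ E := by
        intro t jstar hjstar hint hboxZ
        apply ih (Z t) hboxZ (hZsum t)
        have hsub : frSet ℓ (Z t) ⊆ (frSet ℓ V).erase jstar := by
          intro j hj
          have hjfr := (frSet_mem ℓ (Z t) j).mp hj
          refine Finset.mem_erase.mpr ⟨?_, ?_⟩
          · rintro rfl
            obtain ⟨m, hm⟩ := hint
            exact hjfr m hm
          · by_cases h1 : j = j1
            · exact h1 ▸ hj1
            · by_cases h2 : j = j2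
              · exact h2 ▸ hj2
              · refine (frSet_mem ℓ V j).mpr ?_
                intro m hm
                apply hjfr m
                simp only [hZdef, if_neg h1, if_neg h2]
                simpa using hm
        calc (frSet ℓ (Z t)).card ≤ ((frSet ℓ V).erase jstar).card :=
              Finset.card_le_card hsub
          _ = (frSet ℓ V).card - 1 := Finset.card_erase_of_mem hjstar
          _ ≤ n := by
              have hpos : 1 ≤ (frSet ℓ V).card := Finset.card_pos.mpr ⟨j1, hj1⟩
              omega
      have hboxX : ∀ j, (a j : ℝ) / ℓ ≤ Z t1 j ∧ Z t1 j ≤ (b j : ℝ) / ℓ := by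
        intro j
        by_cases h1 : j = j1
        · rw [h1, hZ1]
          exact ⟨by linarith [(hbox j1).1], by linarith [ht1a]⟩
        · by_cases h2 : j = j2
          · rw [h2, hZ2]
            exact ⟨by linarith [ht1b], by linarith [(hbox j2).2]⟩
          · rw [hZo t1 j h1 h2]
            exact ⟨(hbox j).1, (hbox j).2⟩
      have hboxY : ∀ j, (a j : ℝ) / ℓ ≤ Z (-t2) j ∧ Z (-t2) j ≤ (b j : ℝ) / ℓ := by
        intro j
        by_cases h1 : j = j1
        · rw [h1, hZ1]
          exact ⟨by linarith [ht2a], by linarith [(hbox j1).2]⟩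
        · by_cases h2 : j = j2
          · rw [h2, hZ2]
            exact ⟨by linarith [(hbox j2).1], by linarith [ht2b]⟩
          · rw [hZo (-t2) j h1 h2]
            exact ⟨(hbox j).1, (hbox j).2⟩
      have hintX : ∃ jstar : A, jstar ∈ frSet ℓ V ∧ ∃ m : ℤ, (ℓ : ℝ) * Z t1 jstar = m := by
        rcases ht1eq with h | h
        · refine ⟨j1, hj1, b j1, ?_⟩
          rw [hZ1, h]
          field_simp
          try ring
        · refine ⟨j2, hj2, a j2, ?_⟩
          rw [hZ2, h]
          field_simp
          try ring
      have hintY : ∃ jstar : A, jstar ∈ frSet ℓ V ∧ ∃ m : ℤ, (ℓ : ℝ) * Z (-t2) jstar = m := by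
        rcases ht2eq with h | h
        · refine ⟨j1, hj1, a j1, ?_⟩
          rw [hZ1, h]
          field_simp
          try ring
        · refine ⟨j2, hj2, b j2, ?_⟩
          rw [hZ2, h]
          field_simp
          try ring
      obtain ⟨jX, hjX, hjXint⟩ := hintX
      obtain ⟨jY, hjY, hjYint⟩ := hintY
      have hXmem : Z t1 ∈ convexHull ℝ E := hstep t1 jX hjX hjXint hboxX
      have hYmem : Z (-t2) ∈ convexHull ℝ E := hstep (-t2) jY hjY hjYint hboxY
      have hs : 0 < t1 + t2 := by linarith
      have hsne : t1 + t2 ≠ 0 := ne_of_gt hs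
      have hVeq : V = (t2 / (t1 + t2)) • Z t1 + (t1 / (t1 + t2)) • Z (-t2) := by
        funext j
        simp only [Pi.add_apply, Pi.smul_apply, smul_eq_mul]
        by_cases h1 : j = j1
        · rw [h1, hZ1, hZ1]
          field_simp
          try ring
        · by_cases h2 : j = j2
          · rw [h2, hZ2, hZ2]
            field_simp
            ring
          · rw [hZo t1 j h1 h2, hZo (-t2) j h1 h2]
            field_simp
            ring
      rw [hVeq]
      exact (convex_convexHull ℝ E) hXmem hYmem
        (le_of_lt (div_pos ht2pos hs)) (le_of_lt (div_pos ht1pos hs))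
        (by rw [← add_div, add_comm t2 t1, div_self hsne])

/-- Krein–Milman type decomposition for types: every distribution in the box
Π(ξ, ℓ) (in particular ξ itself) is a convex combination of at most 2^{|A|}
types of order ℓ lying in Π(ξ, ℓ). -/
theorem stmt_9 {A : Type} [Fintype A]
    (ξ : A → ℝ) (hξ0 : ∀ j, 0 ≤ ξ j) (hξ1 : ∑ j, ξ j = 1)
    (ℓ : ℕ) (hℓ : 1 ≤ ℓ)
    (Pi : Set (A → ℝ))
    (hPi : Pi = {V | (∀ j, 0 ≤ V j) ∧ (∑ j, V j = 1) ∧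
      ∀ j, ((⌊(ℓ : ℝ) * ξ j⌋ : ℝ) / ℓ ≤ V j ∧ V j ≤ (⌈(ℓ : ℝ) * ξ j⌉ : ℝ) / ℓ)}) :
    ∃ K : ℕ, K ≤ 2 ^ (Fintype.card A) ∧
      ∃ P : Fin K → (A → ℝ),
        (∀ k, P k ∈ Pi ∧ ∀ j, ∃ m : ℕ, P k j = (m : ℝ) / ℓ) ∧
        ∀ V ∈ Pi, ∃ α : Fin K → ℝ,
          (∀ k, 0 ≤ α k) ∧ (∑ k, α k = 1) ∧ ∀ j, V j = ∑ k, α k * P k j := by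
  classical
  have hℓR : (0 : ℝ) < ℓ := by exact_mod_cast hℓ
  set a : A → ℤ := fun j => ⌊(ℓ : ℝ) * ξ j⌋ with ha
  set b : A → ℤ := fun j => ⌈(ℓ : ℝ) * ξ j⌉ with hb
  have hab : ∀ j, b j ≤ a j + 1 := fun j => Int.ceil_le_floor_add_one _
  have hab' : ∀ j, a j ≤ b j := fun j => Int.floor_le_ceil _
  have ha0 : ∀ j, 0 ≤ a j := fun j =>
    Int.floor_nonneg.mpr (mul_nonneg (Nat.cast_nonneg ℓ) (hξ0 j))
  have hb0 : ∀ j, 0 ≤ b j := fun j => le_trans (ha0 j) (hab' j)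
  set g : Finset A → (A → ℝ) :=
    fun c j => if j ∈ c then (b j : ℝ) / ℓ else (a j : ℝ) / ℓ with hg
  set Efin : Finset (A → ℝ) :=
    (Finset.univ.image g).filter (fun W => ∑ j, W j = 1) with hEfin
  have hcard : Efin.card ≤ 2 ^ Fintype.card A := by
    calc Efin.card ≤ (Finset.univ.image g).card := Finset.card_filter_le _ _
      _ ≤ (Finset.univ : Finset (Finset A)).card := Finset.card_image_le
      _ = 2 ^ Fintype.card A := by
          simp [Finset.card_univ, Fintype.card_finset]
  have hEshape : ∀ W ∈ Efin,
      (∀ j, W j = (a j : ℝ) / ℓ ∨ W j = (b j : ℝ) / ℓ) ∧ ∑ j, W j = 1 := by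
    intro W hW
    rw [hEfin, Finset.mem_filter, Finset.mem_image] at hW
    obtain ⟨⟨c, _, rfl⟩, hsum⟩ := hW
    refine ⟨fun j => ?_, hsum⟩
    by_cases h : j ∈ c
    · right; simp [hg, h]
    · left; simp [hg, h]
  have hE' : ∀ W : A → ℝ, (∀ j, W j = (a j : ℝ) / ℓ ∨ W j = (b j : ℝ) / ℓ) →
      (∑ j, W j = 1) → W ∈ Efin := by
    intro W hsh hsum
    refine Finset.mem_filter.mpr ⟨Finset.mem_image.mpr
      ⟨Finset.univ.filter (fun j => W j = (b j : ℝ) / ℓ), Finset.mem_univ _, ?_⟩, hsum⟩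
    funext j
    by_cases h : W j = (b j : ℝ) / ℓ
    · simp [hg, h]
    · simp only [hg, Finset.mem_filter, Finset.mem_univ, true_and, h, if_false]
      exact ((hsh j).resolve_right h).symm
  have hEPi : ∀ W ∈ Efin, W ∈ Pi := by
    intro W hW
    obtain ⟨hsh, hsum⟩ := hEshape W hW
    have hbox : ∀ j, (a j : ℝ) / ℓ ≤ W j ∧ W j ≤ (b j : ℝ) / ℓ := by
      intro j
      have hle : (a j : ℝ) / ℓ ≤ (b j : ℝ) / ℓ := by
        apply (div_le_div_iff_of_pos_right hℓR).mpr
        exact_mod_cast hab' j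
      rcases hsh j with h | h <;> rw [h] <;> constructor <;> linarith
    rw [hPi]
    refine ⟨fun j => ?_, hsum, fun j => hbox j⟩
    have : (0 : ℝ) ≤ (a j : ℝ) / ℓ := by
      apply div_nonneg ?_ (le_of_lt hℓR)
      exact_mod_cast ha0 j
    linarith [(hbox j).1]
  have hEtype : ∀ W ∈ Efin, ∀ j, ∃ m : ℕ, W j = (m : ℝ) / ℓ := by
    intro W hW j
    obtain ⟨hsh, _⟩ := hEshape W hW
    have hca : (((a j).toNat : ℕ) : ℝ) = ((a j : ℤ) : ℝ) := by
      exact_mod_cast Int.toNat_of_nonneg (ha0 j)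
    have hcb : (((b j).toNat : ℕ) : ℝ) = ((b j : ℤ) : ℝ) := by
      exact_mod_cast Int.toNat_of_nonneg (hb0 j)
    rcases hsh j with h | h
    · exact ⟨(a j).toNat, by rw [h, hca]⟩
    · exact ⟨(b j).toNat, by rw [h, hcb]⟩
  -- enumeration
  refine ⟨Efin.card, hcard, fun k => (Efin.equivFin.symm k : A → ℝ), ?_, ?_⟩
  · intro k
    have hk : ((Efin.equivFin.symm k : Efin) : A → ℝ) ∈ Efin := (Efin.equivFin.symm k).2
    exact ⟨hEPi _ hk, hEtype _ hk⟩
  · intro V hV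
    rw [hPi] at hV
    obtain ⟨hV0, hVs, hVbox⟩ := hV
    have hmem : V ∈ convexHull ℝ (Efin : Set (A → ℝ)) := by
      apply core ℓ hℓ a b hab Efin hE' (Fintype.card A) V hVbox hVs
      calc (frSet ℓ V).card ≤ (Finset.univ : Finset A).card :=
            Finset.card_le_card (Finset.filter_subset _ _)
        _ = Fintype.card A := Finset.card_univ
    rw [Finset.convexHull_eq] at hmem
    obtain ⟨w, hw0, hw1, hwc⟩ := hmem
    have hVrep : V = ∑ y ∈ Efin, w y • y := by
      rw [← hwc, Finset.centerMass_eq_of_sum_1 _ _ hw1]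
      simp
    refine ⟨fun k => w (Efin.equivFin.symm k : A → ℝ), ?_, ?_, ?_⟩
    · intro k
      exact hw0 _ (Efin.equivFin.symm k).2
    · rw [Equiv.sum_comp Efin.equivFin.symm (fun y : Efin => w (y : A → ℝ))]
      rw [Finset.sum_coe_sort Efin w]
      exact hw1
    · intro j
      have h1 : V j = ∑ y ∈ Efin, w y * y j := by
        rw [hVrep]
        rw [Finset.sum_apply]
        simp
      rw [h1, ← Finset.sum_coe_sort Efin (fun y => w y * y j)]
      rw [← Equiv.sum_comp Efin.equivFin.symm (fun y : Efin => w (y : A → ℝ) * (y : A → ℝ) j)]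
end

section
/- Let 𝒜, ℬ be finite sets, ℓ ≥ 1 an integer, Q_A a type of order ℓ on 𝒜, and V_{B|A} any conditional distribution from 𝒜 to ℬ. Then there exist K ≤ |𝒜|·2^{|ℬ|} joint types P^{(1)}_{AB}, …, P^{(K)}_{AB} of order ℓ on 𝒜 × ℬ and convex weights β_1,…,β_K such that Q_A × V_{B|A} = Σ_j β_j P^{(j)}_{AB}, and each P^{(j)}_{AB} satisfies: (i) its 𝒜-marginal equals Q_A; (ii) the total variation distance ‖Q_A × V_{B|A} − P^{(j)}_{AB}‖ ≤ |𝒜||ℬ|/ℓ; and (iii) V_{B|A}(b|a) = 0 implies P^{(j)}_{B|A}(b|a) = 0. -/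
open Finset

lemma aux_one {A B : Type} [Fintype A] [Fintype B] (L : A → B → ℤ) (r : A → ℤ)
    (y : A → B → ℝ)
    (h1 : ∀ a b, (L a b : ℝ) ≤ y a b) (h2 : ∀ a b, y a b ≤ L a b + 1)
    (h3 : ∀ a, ∑ b, y a b = r a) (h0 : ∀ a b, Int.fract (y a b) = 0) :
    ∃ (N : Fin 1 → A → B → ℤ) (β : Fin 1 → ℝ),
      (∀ k, 0 ≤ β k) ∧ (∑ k, β k = 1) ∧
      (∀ a b, y a b = ∑ k, β k * N k a b) ∧
      (∀ k a, ∑ b, N k a b = r a) ∧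
      (∀ k a b, L a b ≤ N k a b ∧ N k a b ≤ L a b + 1) ∧
      (∀ k a b, Int.fract (y a b) = 0 → (N k a b : ℝ) = y a b) := by
  have hy : ∀ a b, y a b = (⌊y a b⌋ : ℝ) := by
    intro a b
    have := Int.floor_add_fract (y a b)
    rw [h0 a b, add_zero] at this
    exact this.symm
  refine ⟨fun _ a b => ⌊y a b⌋, fun _ => 1, fun _ => zero_le_one, by simp, ?_, ?_, ?_, ?_⟩
  · intro a b; simpa using hy a b
  · intro k a
    have : ((∑ b, ⌊y a b⌋ : ℤ) : ℝ) = (r a : ℝ) := by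
      push_cast
      rw [← h3 a]
      exact Finset.sum_congr rfl fun b _ => (hy a b).symm
    exact_mod_cast this
  · intro k a b
    constructor
    · exact Int.le_floor.mpr (h1 a b)
    · have : y a b ≤ ((L a b + 1 : ℤ) : ℝ) := by push_cast; exact h2 a b
      have := Int.floor_le_floor this
      simpa using this
  · intro k a b _; exact (hy a b).symm

lemma aux_decomp {A B : Type} [Fintype A] [Fintype B] (L : A → B → ℤ) (r : A → ℤ) :
    ∀ (f : ℕ) (y : A → B → ℝ),
      (∀ a b, (L a b : ℝ) ≤ y a b) →
      (∀ a b, y a b ≤ L a b + 1) →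
      (∀ a, ∑ b, y a b = r a) →
      (∃ F : Finset (A × B), F.card ≤ f ∧
        ∀ a b, Int.fract (y a b) ≠ 0 → (a, b) ∈ F) →
      ∃ K : ℕ, K ≤ f + 1 ∧
        ∃ (N : Fin K → A → B → ℤ) (β : Fin K → ℝ),
          (∀ k, 0 ≤ β k) ∧ (∑ k, β k = 1) ∧
          (∀ a b, y a b = ∑ k, β k * N k a b) ∧
          (∀ k a, ∑ b, N k a b = r a) ∧
          (∀ k a b, L a b ≤ N k a b ∧ N k a b ≤ L a b + 1) ∧
          (∀ k a b, Int.fract (y a b) = 0 → (N k a b : ℝ) = y a b) := by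
  intro f
  induction f with
  | zero =>
    intro y h1 h2 h3 hF
    obtain ⟨F, hcard, hFmem⟩ := hF
    have hall : ∀ a b, Int.fract (y a b) = 0 := by
      intro a b
      by_contra h
      have h1' : 1 ≤ F.card := Finset.card_pos.mpr ⟨_, hFmem a b h⟩
      omega
    exact ⟨1, le_refl _, aux_one L r y h1 h2 h3 hall⟩
  | succ f ih =>
    intro y h1 h2 h3 hF
    classical
    obtain ⟨F, hcard, hFmem⟩ := hF
    by_cases hall : ∀ a b, Int.fract (y a b) = 0
    · exact ⟨1, by omega, aux_one L r y h1 h2 h3 hall⟩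
    push_neg at hall
    obtain ⟨a₀, b₀, hab⟩ := hall
    -- basic fract facts
    have hfr0 : ∀ a b, 0 ≤ Int.fract (y a b) := fun a b => Int.fract_nonneg _
    have hfr1 : ∀ a b, Int.fract (y a b) < 1 := fun a b => Int.fract_lt_one _
    have hfl : ∀ a b, Int.fract (y a b) ≠ 0 → ⌊y a b⌋ = L a b := by
      intro a b h
      have hne : y a b ≠ ((L a b + 1 : ℤ) : ℝ) := by
        intro he
        apply h
        rw [he, Int.fract_intCast]
      have hlt : y a b < (L a b : ℝ) + 1 := by
        have := h2 a b
        rcases lt_or_eq_of_le this with h' | h'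
        · exact h'
        · exfalso; apply hne; push_cast; exact h'
      exact Int.floor_eq_iff.mpr ⟨h1 a b, hlt⟩
    have hyfl : ∀ a b, Int.fract (y a b) = 0 → ((⌊y a b⌋ : ℝ)) = y a b := by
      intro a b h
      have := Int.floor_add_fract (y a b)
      rw [h, add_zero] at this
      exact this
    have hfract_def : ∀ a b, Int.fract (y a b) = y a b - ⌊y a b⌋ := fun a b => rfl
    -- the deficiency t a and the set S a of entries to round up
    set t : A → ℤ := fun a => r a - ∑ b, ⌊y a b⌋ with ht_def
    have ht_real : ∀ a, (t a : ℝ) = ∑ b, Int.fract (y a b) := by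
      intro a
      have h' : ∑ b, Int.fract (y a b) = (∑ b, y a b) - ∑ b, (⌊y a b⌋ : ℝ) := by
        rw [← Finset.sum_sub_distrib]
        exact Finset.sum_congr rfl fun b _ => hfract_def a b
      rw [h', h3 a]
      simp only [ht_def]
      push_cast
      ring
    have ht0 : ∀ a, 0 ≤ t a := by
      intro a
      have : (0:ℝ) ≤ (t a : ℝ) := by
        rw [ht_real a]; exact Finset.sum_nonneg fun b _ => hfr0 a b
      exact_mod_cast this
    have htle : ∀ a, (t a).toNat ≤ (univ.filter fun b => Int.fract (y a b) ≠ 0).card := by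
      intro a
      have h1' : (t a : ℝ) = ∑ b ∈ univ.filter (fun b => Int.fract (y a b) ≠ 0), Int.fract (y a b) := by
        rw [ht_real a]
        exact (Finset.sum_filter_of_ne (fun b _ h => h)).symm
      have h2' : (t a : ℝ) ≤ ((univ.filter fun b => Int.fract (y a b) ≠ 0).card : ℝ) := by
        rw [h1']
        calc ∑ b ∈ univ.filter (fun b => Int.fract (y a b) ≠ 0), Int.fract (y a b)
            ≤ ∑ b ∈ univ.filter (fun b => Int.fract (y a b) ≠ 0), 1 :=
              Finset.sum_le_sum fun b _ => (hfr1 a b).le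
          _ = _ := by simp
      have : t a ≤ ((univ.filter fun b => Int.fract (y a b) ≠ 0).card : ℤ) := by exact_mod_cast h2'
      omega
    have hex : ∀ a, ∃ s : Finset B, s ⊆ (univ.filter fun b => Int.fract (y a b) ≠ 0) ∧ s.card = (t a).toNat :=
      fun a => Finset.exists_subset_card_eq (htle a)
    choose S hSsub hScard using hex
    have hSfr : ∀ a b, b ∈ S a → Int.fract (y a b) ≠ 0 :=
      fun a b hb => (Finset.mem_filter.mp (hSsub a hb)).2
    set N₀ : A → B → ℤ := fun a b => ⌊y a b⌋ + if b ∈ S a then 1 else 0 with hN₀_def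
    have hN₀r : ∀ a, ∑ b, N₀ a b = r a := by
      intro a
      have hsite : ∑ b, (if b ∈ S a then (1:ℤ) else 0) = (S a).card := by
        simp
      have : ∑ b, N₀ a b = (∑ b, ⌊y a b⌋) + (S a).card := by
        rw [Finset.sum_add_distrib, hsite]
      rw [this, hScard a, Int.toNat_of_nonneg (ht0 a)]
      simp only [ht_def]
      omega
    have hN₀cast : ∀ a b, Int.fract (y a b) = 0 → (N₀ a b : ℝ) = y a b := by
      intro a b h
      have hbS : b ∉ S a := fun hb => hSfr a b hb h
      simp only [hN₀_def, hbS, if_neg, if_false, add_zero]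
      exact hyfl a b h
    have hN₀b : ∀ a b, L a b ≤ N₀ a b ∧ N₀ a b ≤ L a b + 1 := by
      intro a b
      by_cases h : Int.fract (y a b) = 0
      · have hbS : b ∉ S a := fun hb => hSfr a b hb h
        simp only [hN₀_def, hbS, if_neg, if_false, add_zero]
        constructor
        · exact Int.le_floor.mpr (h1 a b)
        · have : y a b ≤ ((L a b + 1 : ℤ) : ℝ) := by push_cast; exact h2 a b
          simpa using Int.floor_le_floor this
      · have := hfl a b h
        simp only [hN₀_def, this]
        split <;> omega
    -- the weight function and the minimizing fractional entry
    set w : A × B → ℝ := fun p =>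
      if Int.fract (y p.1 p.2) = 0 then 1
      else (if p.2 ∈ S p.1 then Int.fract (y p.1 p.2) else 1 - Int.fract (y p.1 p.2)) with hw_def
    have hwpos : ∀ p, 0 < w p := by
      intro p
      simp only [hw_def]
      split
      · exact one_pos
      · next h =>
        split
        · exact lt_of_le_of_ne (hfr0 _ _) (Ne.symm h)
        · linarith [hfr1 p.1 p.2]
    have hwlt1 : ∀ p, Int.fract (y p.1 p.2) ≠ 0 → w p < 1 := by
      intro p h
      simp only [hw_def, if_neg h]
      split
      · exact hfr1 _ _
      · have := lt_of_le_of_ne (hfr0 p.1 p.2) (Ne.symm h)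
        linarith
    obtain ⟨p₀, hp₀F, hp₀min⟩ := F.exists_min_image w ⟨(a₀, b₀), hFmem _ _ hab⟩
    set β₀ : ℝ := w p₀ with hβ₀_def
    have hβ₀pos : 0 < β₀ := hwpos p₀
    have hβ₀lt1 : β₀ < 1 := lt_of_le_of_lt (hp₀min (a₀, b₀) (hFmem _ _ hab)) (hwlt1 _ hab)
    have hβ₀fr : Int.fract (y p₀.1 p₀.2) ≠ 0 := by
      intro h
      have : β₀ = 1 := by simp only [hβ₀_def, hw_def, if_pos h]
      linarith
    have h1β : 0 < 1 - β₀ := by linarith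
    have hmin : ∀ a b, Int.fract (y a b) ≠ 0 →
        β₀ ≤ (if b ∈ S a then Int.fract (y a b) else 1 - Int.fract (y a b)) := by
      intro a b h
      have := hp₀min (a, b) (hFmem a b h)
      simpa only [hw_def, if_neg h] using this
    -- the residual matrix y'
    set y' : A → B → ℝ := fun a b => (y a b - β₀ * N₀ a b) / (1 - β₀) with hy'_def
    have hdecomp : ∀ a b, y a b = β₀ * N₀ a b + (1 - β₀) * y' a b := by
      intro a b
      simp only [hy'_def]
      field_simp
      ring
    have hy'int : ∀ a b, Int.fract (y a b) = 0 → y' a b = y a b := by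
      intro a b h
      simp only [hy'_def, hN₀cast a b h]
      field_simp
    -- explicit values of N₀ on fractional entries
    have hfrL : ∀ a b, Int.fract (y a b) ≠ 0 → Int.fract (y a b) = y a b - L a b := by
      intro a b h
      rw [hfract_def a b, hfl a b h]
    have hNS : ∀ a b, Int.fract (y a b) ≠ 0 → b ∈ S a → (N₀ a b : ℝ) = L a b + 1 := by
      intro a b h hb
      simp only [hN₀_def, hfl a b h, if_pos hb]
      push_cast
      ring
    have hNnS : ∀ a b, Int.fract (y a b) ≠ 0 → b ∉ S a → (N₀ a b : ℝ) = L a b := by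
      intro a b h hb
      simp only [hN₀_def, hfl a b h, if_neg hb]
      push_cast
      ring
    -- bounds for y'
    have hy'lb : ∀ a b, (L a b : ℝ) ≤ y' a b := by
      intro a b
      by_cases h : Int.fract (y a b) = 0
      · rw [hy'int a b h]; exact h1 a b
      · simp only [hy'_def]
        rw [le_div_iff₀ h1β]
        have hfd := hfrL a b h
        by_cases hb : b ∈ S a
        · have hm' : β₀ ≤ Int.fract (y a b) := by simpa [hb] using hmin a b h
          rw [hNS a b h hb]
          nlinarith
        · have hm' : β₀ ≤ 1 - Int.fract (y a b) := by simpa [hb] using hmin a b h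
          rw [hNnS a b h hb]
          nlinarith [h1 a b]
    have hy'ub : ∀ a b, y' a b ≤ (L a b : ℝ) + 1 := by
      intro a b
      by_cases h : Int.fract (y a b) = 0
      · rw [hy'int a b h]; exact h2 a b
      · simp only [hy'_def]
        rw [div_le_iff₀ h1β]
        have hfd := hfrL a b h
        by_cases hb : b ∈ S a
        · have hm' : β₀ ≤ Int.fract (y a b) := by simpa [hb] using hmin a b h
          rw [hNS a b h hb]
          nlinarith [h2 a b]
        · have hm' : β₀ ≤ 1 - Int.fract (y a b) := by simpa [hb] using hmin a b h
          rw [hNnS a b h hb]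
          nlinarith [h2 a b]
    -- row sums of y'
    have hy'r : ∀ a, ∑ b, y' a b = (r a : ℝ) := by
      intro a
      have hs : ∑ b, y' a b = ((∑ b, y a b) - β₀ * ∑ b, (N₀ a b : ℝ)) / (1 - β₀) := by
        simp only [hy'_def]
        rw [← Finset.sum_div, Finset.mul_sum, ← Finset.sum_sub_distrib]
      have hN : ∑ b, (N₀ a b : ℝ) = (r a : ℝ) := by
        rw [← hN₀r a]
        push_cast
        ring
      rw [hs, h3 a, hN]
      field_simp
    -- y' is integral at p₀
    have hy'p₀ : Int.fract (y' p₀.1 p₀.2) = 0 := by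
      have h := hβ₀fr
      have hfd := hfrL p₀.1 p₀.2 h
      by_cases hb : p₀.2 ∈ S p₀.1
      · have hβval : β₀ = Int.fract (y p₀.1 p₀.2) := by
          simp only [hβ₀_def, hw_def, if_neg h, if_pos hb]
        have : y' p₀.1 p₀.2 = ((L p₀.1 p₀.2 : ℤ) : ℝ) := by
          simp only [hy'_def]
          rw [hNS p₀.1 p₀.2 h hb, hβval, hfd]
          have hne : (1 : ℝ) - (y p₀.1 p₀.2 - L p₀.1 p₀.2) ≠ 0 := by
            rw [← hfd, ← hβval]; exact ne_of_gt h1β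
          field_simp
          ring
        rw [this, Int.fract_intCast]
      · have hβval : β₀ = 1 - Int.fract (y p₀.1 p₀.2) := by
          simp only [hβ₀_def, hw_def, if_neg h, if_neg hb]
        have : y' p₀.1 p₀.2 = ((L p₀.1 p₀.2 + 1 : ℤ) : ℝ) := by
          simp only [hy'_def]
          rw [hNnS p₀.1 p₀.2 h hb, hβval, hfd]
          have hne : y p₀.1 p₀.2 - (L p₀.1 p₀.2 : ℝ) ≠ 0 := by
            rw [← hfd]; exact h
          rw [div_eq_iff (by rw [sub_sub_cancel]; exact hne)]
          push_cast
          ring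
        rw [this, Int.fract_intCast]
    -- apply the induction hypothesis to y'
    have hF' : ∃ F' : Finset (A × B), F'.card ≤ f ∧
        ∀ a b, Int.fract (y' a b) ≠ 0 → (a, b) ∈ F' := by
      refine ⟨F.erase p₀, ?_, ?_⟩
      · have := Finset.card_erase_of_mem hp₀F
        omega
      · intro a b h
        have hy0 : Int.fract (y a b) ≠ 0 := by
          intro h0
          apply h
          rw [hy'int a b h0, h0]
        refine Finset.mem_erase.mpr ⟨?_, hFmem a b hy0⟩
        intro he
        apply h
        have hz := hy'p₀
        rw [← he] at hz
        simpa using hz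
    obtain ⟨K', hK', N', β', hβ'0, hβ'1, hdec', hr', hb', hi'⟩ :=
      ih y' hy'lb hy'ub hy'r hF'
    refine ⟨K' + 1, by omega, Fin.cons N₀ N', Fin.cons β₀ (fun k => (1 - β₀) * β' k),
      ?_, ?_, ?_, ?_, ?_, ?_⟩
    · intro k
      refine Fin.cases ?_ ?_ k
      · simpa using hβ₀pos.le
      · intro j
        simpa using mul_nonneg h1β.le (hβ'0 j)
    · rw [Fin.sum_cons, ← Finset.mul_sum, hβ'1]
      simp
    · intro a b
      rw [Fin.sum_univ_succ]
      simp only [Fin.cons_zero, Fin.cons_succ]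
      rw [hdecomp a b, hdec' a b, Finset.mul_sum]
      congr 1
      exact Finset.sum_congr rfl fun k _ => by ring
    · intro k a
      refine Fin.cases ?_ ?_ k
      · simpa using hN₀r a
      · intro j
        simpa using hr' j a
    · intro k a b
      refine Fin.cases ?_ ?_ k
      · simpa using hN₀b a b
      · intro j
        simpa using hb' j a b
    · intro k a b h
      refine Fin.cases ?_ ?_ k
      · simpa using hN₀cast a b h
      · intro j
        have h' : Int.fract (y' a b) = 0 := by rw [hy'int a b h, h]
        have := hi' j a b h'
        rw [hy'int a b h] at this
        simpa using this

/-- Decomposition of a joint distribution Q_A × V_{B|A} (with Q_A a type of order ℓ)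
into a convex combination of at most |A|·2^{|B|} joint types of order ℓ, each with
A-marginal Q_A, each within total variation |A||B|/ℓ of Q_A × V_{B|A}, and each
inheriting the zeros of V_{B|A}. -/
theorem stmt_10 {A B : Type} [Fintype A] [Fintype B]
    (ℓ : ℕ) (hℓ : 1 ≤ ℓ)
    (Q : A → ℝ) (hQ0 : ∀ a, 0 ≤ Q a) (hQ1 : ∑ a, Q a = 1)
    (hQtype : ∀ a, ∃ m : ℕ, Q a = (m : ℝ) / ℓ)
    (V : B → A → ℝ) (hV0 : ∀ b a, 0 ≤ V b a) (hV1 : ∀ a, ∑ b, V b a = 1) :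
    ∃ K : ℕ, K ≤ Fintype.card A * 2 ^ (Fintype.card B) ∧
      ∃ (P : Fin K → A → B → ℝ) (β : Fin K → ℝ),
        (∀ k, 0 ≤ β k) ∧ (∑ k, β k = 1) ∧
        (∀ a b, Q a * V b a = ∑ k, β k * P k a b) ∧
        ∀ k, (∀ a b, 0 ≤ P k a b) ∧ (∑ a, ∑ b, P k a b = 1) ∧
          (∀ a b, ∃ m : ℕ, P k a b = (m : ℝ) / ℓ) ∧
          (∀ a, ∑ b, P k a b = Q a) ∧
          (∑ a, ∑ b, |Q a * V b a - P k a b|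
            ≤ (Fintype.card A * Fintype.card B : ℝ) / ℓ) ∧
          (∀ a b, V b a = 0 → P k a b = 0) := by
  classical
  have hℓR : (0 : ℝ) < ℓ := by positivity
  -- A and B are nonempty
  have hcA : 1 ≤ Fintype.card A := by
    by_contra h
    push_neg at h
    interval_cases hA : Fintype.card A
    have : IsEmpty A := Fintype.card_eq_zero_iff.mp hA
    rw [Finset.univ_eq_empty, Finset.sum_empty] at hQ1
    norm_num at hQ1
  have hcB : 1 ≤ Fintype.card B := by
    by_contra h
    push_neg at h
    interval_cases hB : Fintype.card B
    have : IsEmpty B := Fintype.card_eq_zero_iff.mp hB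
    obtain ⟨a⟩ := Fintype.card_pos_iff.mp hcA
    have := hV1 a
    rw [Finset.univ_eq_empty, Finset.sum_empty] at this
    norm_num at this
  choose m hm using hQtype
  -- the scaled joint matrix
  set y : A → B → ℝ := fun a b => ℓ * (Q a * V b a) with hy_def
  have hy0 : ∀ a b, 0 ≤ y a b := by
    intro a b
    simp only [hy_def]
    have := mul_nonneg (hQ0 a) (hV0 b a)
    positivity
  have hrow : ∀ a, ∑ b, y a b = ((m a : ℤ) : ℝ) := by
    intro a
    simp only [hy_def]
    rw [← Finset.mul_sum, ← Finset.mul_sum, hV1 a, mul_one, hm a]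
    push_cast
    field_simp
  obtain ⟨K, hK, N, β, hβ0, hβ1, hdec, hr, hb, hi⟩ :=
    aux_decomp (fun a b => ⌊y a b⌋) (fun a => (m a : ℤ))
      (Fintype.card A * Fintype.card B) y
      (fun a b => Int.floor_le _) (fun a b => (Int.lt_floor_add_one _).le)
      hrow
      ⟨Finset.univ, by rw [Finset.card_univ, Fintype.card_prod], fun a b _ => Finset.mem_univ _⟩
  have hKbound : K ≤ Fintype.card A * 2 ^ Fintype.card B := by
    have h2 : Fintype.card B + 1 ≤ 2 ^ Fintype.card B := Nat.succ_le_of_lt (Nat.lt_two_pow_self)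
    calc K ≤ Fintype.card A * Fintype.card B + 1 := hK
      _ ≤ Fintype.card A * Fintype.card B + Fintype.card A := by omega
      _ = Fintype.card A * (Fintype.card B + 1) := by ring
      _ ≤ Fintype.card A * 2 ^ Fintype.card B := Nat.mul_le_mul_left _ h2
  have hN0 : ∀ k a b, 0 ≤ N k a b := by
    intro k a b
    have := (hb k a b).1
    have h0 : 0 ≤ ⌊y a b⌋ := Int.floor_nonneg.mpr (hy0 a b)
    omega
  have hsum_m : ∑ a, ((m a : ℤ) : ℝ) = (ℓ : ℝ) := by
    have : ∑ a, Q a = ∑ a, (m a : ℝ) / ℓ := Finset.sum_congr rfl fun a _ => hm a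
    rw [hQ1] at this
    rw [← Finset.sum_div] at this
    push_cast
    field_simp at this
    push_cast at this
    linarith
  refine ⟨K, hKbound, fun k a b => (N k a b : ℝ) / ℓ, β, hβ0, hβ1, ?_, ?_⟩
  · intro a b
    have h := hdec a b
    have : Q a * V b a = y a b / ℓ := by
      simp only [hy_def]
      field_simp
    rw [this, h, Finset.sum_div]
    exact Finset.sum_congr rfl fun k _ => by ring
  · intro k
    have hmarg : ∀ a, ∑ b, ((N k a b : ℝ) / ℓ) = Q a := by
      intro a
      rw [← Finset.sum_div]
      have : ∑ b, ((N k a b : ℤ) : ℝ) = ((m a : ℤ) : ℝ) := by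
        exact_mod_cast congrArg (Int.cast : ℤ → ℝ) (hr k a)
      rw [this, hm a]
      push_cast
      ring
    refine ⟨?_, ?_, ?_, hmarg, ?_, ?_⟩
    · intro a b
      have := hN0 k a b
      positivity
    · rw [Finset.sum_congr rfl fun a _ => hmarg a]
      exact hQ1
    · intro a b
      refine ⟨(N k a b).toNat, ?_⟩
      show (N k a b : ℝ) / ℓ = ((N k a b).toNat : ℝ) / ℓ
      have : ((N k a b).toNat : ℝ) = ((N k a b : ℤ) : ℝ) := by
        exact_mod_cast congrArg (Int.cast : ℤ → ℝ) (Int.toNat_of_nonneg (hN0 k a b))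
      rw [this]
    · calc ∑ a, ∑ b, |Q a * V b a - (N k a b : ℝ) / ℓ|
          ≤ ∑ a, ∑ b, (1 : ℝ) / ℓ := by
            refine Finset.sum_le_sum fun a _ => Finset.sum_le_sum fun b _ => ?_
            have hQV : Q a * V b a = y a b / ℓ := by
              simp only [hy_def]; field_simp
            rw [hQV, div_sub_div_same, abs_div, abs_of_pos hℓR]
            rw [div_le_div_iff₀ hℓR hℓR]
            rw [show |y a b - (N k a b : ℝ)| * ℓ ≤ 1 * ℓ ↔ |y a b - (N k a b : ℝ)| ≤ 1 from mul_le_mul_iff_of_pos_right hℓR]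
            have h1 := (hb k a b).1
            have h2 := (hb k a b).2
            have hf1 : ((⌊y a b⌋ : ℤ) : ℝ) ≤ y a b := Int.floor_le _
            have hf2 : y a b < (⌊y a b⌋ : ℝ) + 1 := Int.lt_floor_add_one _
            have hc1 : ((⌊y a b⌋ : ℤ) : ℝ) ≤ (N k a b : ℝ) := by exact_mod_cast h1
            have hc2 : (N k a b : ℝ) ≤ (⌊y a b⌋ : ℝ) + 1 := by exact_mod_cast h2
            rw [abs_le]
            constructor <;> linarith
        _ = (Fintype.card A * Fintype.card B : ℝ) / ℓ := by
            simp [Finset.sum_div, Finset.card_univ]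
            ring
    · intro a b hV
      have hy : y a b = 0 := by simp [hy_def, hV]
      have : Int.fract (y a b) = 0 := by rw [hy]; exact Int.fract_zero
      have := hi k a b this
      rw [hy] at this
      show (N k a b : ℝ) / ℓ = 0
      rw [this]
      simp
end

section
/- (Binary-input symmetric optimization) Let 𝒳 = {0,1}, 𝒴, 𝒵 finite, q: 𝒳 × 𝒴 → ℝ, and P_{XZ}, P_{Y|XZ} given. For z ∈ 𝒵 define d_q(z) = Σ_y [P_{Y|XZ}(y|0,z) − P_{Y|XZ}(y|1,z)]·[q(1,y) − q(0,y)]. Then the minimum of E_{V_{X̃ZX} × P_{Y|XZ}}[q(X̃,Y) − q(X,Y)] over all symmetric V_{X̃ZX} (V(x̃,z,x) = V(x,z,x̃)) with V_{XZ} = P_{XZ} and satisfying V_{X̃X|Z}(x,x|z) ≥ P_{X|Z}(x|z)² for all (x,z), equals Σ_{z: d_q(z) < 0} P_Z(z)·P_{X|Z}(0|z)·P_{X|Z}(1|z)·d_q(z). In particular, this minimum is nonnegative if and only if for every z, P_Z(z)·P_{X|Z}(0|z)·P_{X|Z}(1|z)·d_q(z) ≥ 0. -/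
open Finset
open scoped Classical

/-- Binary-input symmetric optimization: the minimum of
E[q(X̃,Y) − q(X,Y)] over symmetric couplings V_{X̃ZX} with (X,Z)-marginal P_{XZ}
and diagonal constraint V_{X̃X|Z}(x,x|z) ≥ P_{X|Z}(x|z)² equals
Σ_{z : d_q(z)<0} P_Z(z)·P_{X|Z}(0|z)·P_{X|Z}(1|z)·d_q(z); in particular it is
nonnegative iff P_Z(z)·P_{X|Z}(0|z)·P_{X|Z}(1|z)·d_q(z) ≥ 0 for all z. -/
theorem stmt_12 {Y Z : Type} [Fintype Y] [Fintype Z]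
    (q : Fin 2 → Y → ℝ)
    (PXZ : Fin 2 → Z → ℝ) (hPXZ0 : ∀ x z, 0 ≤ PXZ x z)
    (hPXZ1 : ∑ x, ∑ z, PXZ x z = 1)
    (PY : Y → Fin 2 → Z → ℝ) (hPY0 : ∀ y x z, 0 ≤ PY y x z)
    (hPY1 : ∀ x z, ∑ y, PY y x z = 1)
    (PZ : Z → ℝ) (hPZ : ∀ z, PZ z = ∑ x, PXZ x z)
    (d : Z → ℝ) (hd : ∀ z, d z = ∑ y, (PY y 0 z - PY y 1 z) * (q 1 y - q 0 y))
    (obj : (Fin 2 → Z → Fin 2 → ℝ) → ℝ)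
    (hobj : ∀ V, obj V = ∑ xt, ∑ z, ∑ x, ∑ y, V xt z x * PY y x z * (q xt y - q x y))
    (feas : Set (Fin 2 → Z → Fin 2 → ℝ))
    (hfeas : feas = {V | (∀ xt z x, 0 ≤ V xt z x) ∧
      (∀ xt z x, V xt z x = V x z xt) ∧
      (∀ x z, ∑ xt, V xt z x = PXZ x z) ∧
      (∀ x z, (PXZ x z / PZ z) ^ 2 ≤ V x z x / PZ z)})
    (S : ℝ)
    (hS : S = ∑ z ∈ Finset.univ.filter (fun z => d z < 0),
      PZ z * (PXZ 0 z / PZ z) * (PXZ 1 z / PZ z) * d z) :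
    IsLeast (obj '' feas) S ∧
      (0 ≤ S ↔ ∀ z, 0 ≤ PZ z * (PXZ 0 z / PZ z) * (PXZ 1 z / PZ z) * d z) := by
  subst hfeas hS
  have hx2 : ∀ x : Fin 2, x = 0 ∨ x = 1 := by decide
  have hPZ0 : ∀ z, 0 ≤ PZ z := fun z => by
    rw [hPZ]; exact Finset.sum_nonneg fun x _ => hPXZ0 x z
  have hPZsum : ∀ z, PZ z = PXZ 0 z + PXZ 1 z := fun z => by
    rw [hPZ, Fin.sum_univ_two]
  have hPXZle : ∀ x z, PXZ x z ≤ PZ z := by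
    intro x z
    rcases hx2 x with rfl | rfl
    · rw [hPZsum]; linarith [hPXZ0 1 z]
    · rw [hPZsum]; linarith [hPXZ0 0 z]
  have hzero : ∀ z, PZ z = 0 → ∀ x, PXZ x z = 0 := by
    intro z hz x
    have h1 := hPXZle x z
    have h2 := hPXZ0 x z
    linarith
  -- objective simplification for symmetric V
  have key : ∀ V : Fin 2 → Z → Fin 2 → ℝ, (∀ xt z x, V xt z x = V x z xt) →
      obj V = ∑ z, V 0 z 1 * d z := by
    intro V hsym
    rw [hobj, Finset.sum_comm]
    refine Finset.sum_congr rfl fun z _ => ?_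
    rw [hd, Finset.mul_sum]
    simp only [Fin.sum_univ_two, hsym 1 z 0]
    rw [← Finset.sum_add_distrib, ← Finset.sum_add_distrib, ← Finset.sum_add_distrib]
    exact Finset.sum_congr rfl fun y _ => by ring
  -- witness
  set a : Z → ℝ := fun z => if d z < 0 then PXZ 0 z * PXZ 1 z / PZ z else 0 with ha
  have ha0 : ∀ z, 0 ≤ a z := by
    intro z; rw [ha]; dsimp only; split
    · exact div_nonneg (mul_nonneg (hPXZ0 0 z) (hPXZ0 1 z)) (hPZ0 z)
    · exact le_refl 0
  have haPZ : ∀ z, a z * PZ z ≤ PXZ 0 z * PXZ 1 z := by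
    intro z; rw [ha]; dsimp only; split
    · by_cases hz : PZ z = 0
      · rw [hz, mul_zero]; exact mul_nonneg (hPXZ0 0 z) (hPXZ0 1 z)
      · rw [div_mul_cancel₀ _ hz]
    · rw [zero_mul]; exact mul_nonneg (hPXZ0 0 z) (hPXZ0 1 z)
  have hale : ∀ x z, a z ≤ PXZ x z := by
    intro x z
    by_cases hz : PZ z = 0
    · have h0 := hzero z hz
      rw [ha]; dsimp only; split
      · rw [h0 0, h0 1, zero_mul, zero_div]; exact hPXZ0 x z
      · exact hPXZ0 x z
    · have hzpos : 0 < PZ z := lt_of_le_of_ne (hPZ0 z) (Ne.symm hz)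
      have h := haPZ z
      rw [← mul_le_mul_iff_of_pos_right hzpos]
      rcases hx2 x with rfl | rfl
      · have h3 : PXZ 0 z * PZ z = PXZ 0 z ^ 2 + PXZ 0 z * PXZ 1 z := by
          rw [hPZsum z]; ring
        nlinarith [hPXZ0 0 z]
      · have h3 : PXZ 1 z * PZ z = PXZ 1 z ^ 2 + PXZ 0 z * PXZ 1 z := by
          rw [hPZsum z]; ring
        nlinarith [hPXZ0 1 z]
  set W : Fin 2 → Z → Fin 2 → ℝ := fun xt z x => if xt = x then PXZ x z - a z else a z with hW
  have hWsym : ∀ xt z x, W xt z x = W x z xt := by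
    intro xt z x
    rcases eq_or_ne xt x with h | h
    · subst h; rfl
    · rw [hW]; dsimp only; rw [if_neg h, if_neg (Ne.symm h)]
  have hWfeas : W ∈ {V : Fin 2 → Z → Fin 2 → ℝ | (∀ xt z x, 0 ≤ V xt z x) ∧
      (∀ xt z x, V xt z x = V x z xt) ∧
      (∀ x z, ∑ xt, V xt z x = PXZ x z) ∧
      (∀ x z, (PXZ x z / PZ z) ^ 2 ≤ V x z x / PZ z)} := by
    refine ⟨?_, hWsym, ?_, ?_⟩
    · intro xt z x; rw [hW]; dsimp only; split
      · linarith [hale x z]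
      · exact ha0 z
    · intro x z
      rw [Fin.sum_univ_two, hW]
      rcases hx2 x with rfl | rfl
      · dsimp only
        rw [if_pos rfl, if_neg (by decide : (1 : Fin 2) ≠ 0)]
        ring
      · dsimp only
        rw [if_neg (by decide : (0 : Fin 2) ≠ 1), if_pos rfl]
        ring
    · intro x z
      have hWxx : W x z x = PXZ x z - a z := by rw [hW]; dsimp only; rw [if_pos rfl]
      rw [hWxx]
      by_cases hz : PZ z = 0
      · simp [hz]
      · have hzpos : 0 < PZ z := lt_of_le_of_ne (hPZ0 z) (Ne.symm hz)
        rw [div_pow, div_le_div_iff₀ (by positivity) hzpos]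
        have h := haPZ z
        have h5 : 0 ≤ PXZ 0 z * PXZ 1 z - a z * PZ z := by linarith
        have h7 := mul_nonneg (hPZ0 z) h5
        rcases hx2 x with rfl | rfl
        · have h6 : (PXZ 0 z - a z) * PZ z ^ 2 - PXZ 0 z ^ 2 * PZ z
              = PZ z * (PXZ 0 z * PXZ 1 z - a z * PZ z) := by
            rw [hPZsum z]; ring
          linarith
        · have h6 : (PXZ 1 z - a z) * PZ z ^ 2 - PXZ 1 z ^ 2 * PZ z
              = PZ z * (PXZ 0 z * PXZ 1 z - a z * PZ z) := by
            rw [hPZsum z]; ring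
          linarith
  have hWobj : obj W = ∑ z ∈ Finset.univ.filter (fun z => d z < 0),
      PZ z * (PXZ 0 z / PZ z) * (PXZ 1 z / PZ z) * d z := by
    rw [key W hWsym, Finset.sum_filter]
    refine Finset.sum_congr rfl fun z _ => ?_
    have hW01 : W 0 z 1 = a z := by
      rw [hW]; dsimp only; rw [if_neg (by decide : (0 : Fin 2) ≠ 1)]
    rw [hW01, ha]; dsimp only
    by_cases hdz : d z < 0
    · rw [if_pos hdz, if_pos hdz]
      by_cases hz : PZ z = 0
      · rw [hz, hzero z hz 0]
        simp
      · field_simp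
    · rw [if_neg hdz, if_neg hdz]
      ring
  constructor
  · constructor
    · exact ⟨W, hWfeas, hWobj⟩
    · rintro r ⟨V, ⟨hV0, hVsym, hVmarg, hVdiag⟩, rfl⟩
      rw [key V hVsym, Finset.sum_filter]
      refine Finset.sum_le_sum fun z _ => ?_
      by_cases hdz : d z < 0
      · rw [if_pos hdz]
        by_cases hz : PZ z = 0
        · have h1 : PXZ 1 z = 0 := hzero z hz 1
          have hVm := hVmarg 1 z
          rw [Fin.sum_univ_two] at hVm
          have hV01 : V 0 z 1 = 0 := by nlinarith [hV0 0 z 1, hV0 1 z 1]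
          rw [hV01, hz]; simp
        · have hzpos : 0 < PZ z := lt_of_le_of_ne (hPZ0 z) (Ne.symm hz)
          have hVm := hVmarg 0 z
          rw [Fin.sum_univ_two] at hVm
          have hsym01 := hVsym 1 z 0
          have hdiag := hVdiag 0 z
          rw [div_pow, div_le_div_iff₀ (by positivity) hzpos] at hdiag
          -- hdiag : PXZ 0 z ^ 2 * PZ z ≤ V 0 z 0 * PZ z ^ 2
          have h1 : PXZ 0 z ^ 2 ≤ V 0 z 0 * PZ z := by
            have h2 : PXZ 0 z ^ 2 * PZ z ≤ (V 0 z 0 * PZ z) * PZ z := by nlinarith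
            exact (mul_le_mul_iff_of_pos_right hzpos).mp h2
          have h3 : PXZ 0 z * PZ z = PXZ 0 z ^ 2 + PXZ 0 z * PXZ 1 z := by
            rw [hPZsum z]; ring
          have h4 : V 0 z 0 * PZ z = PXZ 0 z * PZ z - V 0 z 1 * PZ z := by
            have hV00 : V 0 z 0 = PXZ 0 z - V 0 z 1 := by linarith
            rw [hV00]; ring
          have hb : V 0 z 1 * PZ z ≤ PXZ 0 z * PXZ 1 z := by linarith
          have heq : PZ z * (PXZ 0 z / PZ z) * (PXZ 1 z / PZ z)
              = PXZ 0 z * PXZ 1 z / PZ z := by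
            field_simp
          rw [heq]
          have hle : V 0 z 1 ≤ PXZ 0 z * PXZ 1 z / PZ z := (le_div_iff₀ hzpos).mpr hb
          exact mul_le_mul_of_nonpos_right hle (le_of_lt hdz)
      · rw [if_neg hdz]
        exact mul_nonneg (hV0 0 z 1) (not_lt.mp hdz)
  · constructor
    · intro hSnn z
      have hfac : ∀ w, 0 ≤ PZ w * (PXZ 0 w / PZ w) * (PXZ 1 w / PZ w) :=
        fun w => mul_nonneg (mul_nonneg (hPZ0 w) (div_nonneg (hPXZ0 0 w) (hPZ0 w)))
          (div_nonneg (hPXZ0 1 w) (hPZ0 w))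
      by_cases hdz : d z < 0
      · have hnonpos : ∀ w ∈ Finset.univ.filter (fun z => d z < 0),
            PZ w * (PXZ 0 w / PZ w) * (PXZ 1 w / PZ w) * d w ≤ 0 := by
          intro w hw
          rw [Finset.mem_filter] at hw
          exact mul_nonpos_of_nonneg_of_nonpos (hfac w) (le_of_lt hw.2)
        have hsum0 := le_antisymm (Finset.sum_nonpos hnonpos) hSnn
        have hz0 := (Finset.sum_eq_zero_iff_of_nonpos hnonpos).mp hsum0 z
          (Finset.mem_filter.mpr ⟨Finset.mem_univ z, hdz⟩)
        exact le_of_eq hz0.symm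
      · exact mul_nonneg (hfac z) (not_lt.mp hdz)
    · intro h
      exact Finset.sum_nonneg fun z _ => h z
end

section
/- (Binary-input: the diagonal constraint is inactive for the sign of the minimum) In the setting of the previous statement, removing the constraint V_{X̃X|Z}(x,x|z) ≥ P_{X|Z}(x|z)² changes the optimal value of the minimization to Σ_{z: d_q(z) < 0} min{P_{XZ}(0,z), P_{XZ}(1,z)}·d_q(z), but the nonnegativity condition is unchanged: the unconstrained minimum is ≥ 0 if and only if the constrained minimum is ≥ 0, both being equivalent to: for all z, P_Z(z)·P_{X|Z}(0|z)·P_{X|Z}(1|z)·d_q(z) ≥ 0. -/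
open Finset
open scoped Classical

/-- Binary-input: removing the diagonal constraint changes the minimum to
Σ_{z : d_q(z)<0} min{P_{XZ}(0,z), P_{XZ}(1,z)}·d_q(z), but the nonnegativity
condition is unchanged: both minima are ≥ 0 iff for all z,
P_Z(z)·P_{X|Z}(0|z)·P_{X|Z}(1|z)·d_q(z) ≥ 0. -/
theorem stmt_13 {Y Z : Type} [Fintype Y] [Fintype Z]
    (q : Fin 2 → Y → ℝ)
    (PXZ : Fin 2 → Z → ℝ) (hPXZ0 : ∀ x z, 0 ≤ PXZ x z)
    (hPXZ1 : ∑ x, ∑ z, PXZ x z = 1)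
    (PY : Y → Fin 2 → Z → ℝ) (hPY0 : ∀ y x z, 0 ≤ PY y x z)
    (hPY1 : ∀ x z, ∑ y, PY y x z = 1)
    (PZ : Z → ℝ) (hPZ : ∀ z, PZ z = ∑ x, PXZ x z)
    (d : Z → ℝ) (hd : ∀ z, d z = ∑ y, (PY y 0 z - PY y 1 z) * (q 1 y - q 0 y))
    (obj : (Fin 2 → Z → Fin 2 → ℝ) → ℝ)
    (hobj : ∀ V, obj V = ∑ xt, ∑ z, ∑ x, ∑ y, V xt z x * PY y x z * (q xt y - q x y))
    (feasU : Set (Fin 2 → Z → Fin 2 → ℝ))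
    (hfeasU : feasU = {V | (∀ xt z x, 0 ≤ V xt z x) ∧
      (∀ xt z x, V xt z x = V x z xt) ∧
      (∀ x z, ∑ xt, V xt z x = PXZ x z)})
    (S : ℝ)
    (hS : S = ∑ z ∈ Finset.univ.filter (fun z => d z < 0),
      PZ z * (PXZ 0 z / PZ z) * (PXZ 1 z / PZ z) * d z)
    (S' : ℝ)
    (hS' : S' = ∑ z ∈ Finset.univ.filter (fun z => d z < 0),
      min (PXZ 0 z) (PXZ 1 z) * d z) :
    IsLeast (obj '' feasU) S' ∧
      (0 ≤ S' ↔ 0 ≤ S) ∧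
      (0 ≤ S' ↔ ∀ z, 0 ≤ PZ z * (PXZ 0 z / PZ z) * (PXZ 1 z / PZ z) * d z) := by
  -- abbreviations
  set m : Z → ℝ := fun z => min (PXZ 0 z) (PXZ 1 z) with hm
  set c : Z → ℝ := fun z => PZ z * (PXZ 0 z / PZ z) * (PXZ 1 z / PZ z) with hc
  have hPZnn : ∀ z, 0 ≤ PZ z := by
    intro z; rw [hPZ z, Fin.sum_univ_two]
    exact add_nonneg (hPXZ0 0 z) (hPXZ0 1 z)
  have hmnn : ∀ z, 0 ≤ m z := fun z => le_min (hPXZ0 0 z) (hPXZ0 1 z)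
  have hcnn : ∀ z, 0 ≤ c z := fun z =>
    mul_nonneg (mul_nonneg (hPZnn z) (div_nonneg (hPXZ0 0 z) (hPZnn z)))
      (div_nonneg (hPXZ0 1 z) (hPZnn z))
  have hce : ∀ z, (c z = 0 ↔ m z = 0) := by
    intro z
    have hmin : m z = 0 ↔ PXZ 0 z * PXZ 1 z = 0 := by
      rw [mul_eq_zero]
      constructor
      · intro h
        rcases le_total (PXZ 0 z) (PXZ 1 z) with hle | hle
        · left; rw [hm] at h; simpa [min_eq_left hle] using h
        · right; rw [hm] at h; simpa [min_eq_right hle] using h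
      · rintro (h | h)
        · rw [hm]; simp only
          have := hPXZ0 1 z
          rw [h, min_eq_left this]
        · rw [hm]; simp only
          have := hPXZ0 0 z
          rw [h, min_eq_right this]
    rw [hmin]
    by_cases hz : PZ z = 0
    · have h0 : PXZ 0 z = 0 := by
        have := hPZ z; rw [Fin.sum_univ_two] at this
        nlinarith [hPXZ0 0 z, hPXZ0 1 z]
      simp [hc, hz, h0]
    · have : c z = PXZ 0 z * PXZ 1 z / PZ z := by
        rw [hc]; field_simp
      rw [this, div_eq_zero_iff]
      simp [hz]
  -- key: objective of a symmetric V
  have key : ∀ V : Fin 2 → Z → Fin 2 → ℝ, (∀ xt z x, V xt z x = V x z xt) →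
      obj V = ∑ z, V 0 z 1 * d z := by
    intro V hsym
    rw [hobj, Finset.sum_comm]
    refine Finset.sum_congr rfl fun z _ => ?_
    simp only [Fin.sum_univ_two]
    rw [hd z, hsym 1 z 0, Finset.mul_sum, ← Finset.sum_add_distrib,
      ← Finset.sum_add_distrib, ← Finset.sum_add_distrib]
    exact Finset.sum_congr rfl fun y _ => by ring
  -- the minimizer
  set a : Z → ℝ := fun z => if d z < 0 then m z else 0 with ha
  have hann : ∀ z, 0 ≤ a z := by
    intro z; rw [ha]; dsimp only; split
    · exact hmnn z
    · exact le_refl 0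
  have hale : ∀ z x, a z ≤ PXZ x z := by
    intro z x
    have hle : m z ≤ PXZ x z := by
      fin_cases x
      · exact min_le_left _ _
      · exact min_le_right _ _
    rw [ha]; dsimp only; split
    · exact hle
    · exact hPXZ0 x z
  set V0 : Fin 2 → Z → Fin 2 → ℝ :=
    fun xt z x => if xt = x then PXZ x z - a z else a z with hV0
  have hV0sym : ∀ xt z x, V0 xt z x = V0 x z xt := by
    intro xt z x; fin_cases xt <;> fin_cases x <;> simp [hV0]
  have hV0mem : V0 ∈ feasU := by
    rw [hfeasU]
    refine ⟨?_, hV0sym, ?_⟩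
    · intro xt z x; rw [hV0]; dsimp only; split
      · linarith [hale z x]
      · exact hann z
    · intro x z
      rw [Fin.sum_univ_two]
      fin_cases x <;> simp [hV0] <;> ring
  have hobjV0 : obj V0 = S' := by
    rw [key V0 hV0sym, hS', Finset.sum_filter]
    refine Finset.sum_congr rfl fun z _ => ?_
    by_cases hz : d z < 0 <;> simp [hV0, ha, hz, hm]
  -- lower bound
  have hlb : ∀ V ∈ feasU, S' ≤ obj V := by
    intro V hV
    rw [hfeasU] at hV
    obtain ⟨hVnn, hVsym, hVmarg⟩ := hV
    have hub : ∀ z, V 0 z 1 ≤ m z := by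
      intro z
      have h0 := hVmarg 0 z
      have h1 := hVmarg 1 z
      rw [Fin.sum_univ_two] at h0 h1
      have e : V 1 z 0 = V 0 z 1 := hVsym 1 z 0
      refine le_min ?_ ?_
      · have := hVnn 0 z 0; linarith
      · have := hVnn 1 z 1; linarith
    rw [key V hVsym, hS', Finset.sum_filter]
    refine Finset.sum_le_sum fun z _ => ?_
    by_cases hz : d z < 0
    · simp only [hz, if_true]
      exact mul_le_mul_of_nonpos_right (hub z) (le_of_lt hz)
    · simp only [hz, if_false]
      exact mul_nonneg (hVnn 0 z 1) (not_lt.mp hz)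
  have hleast : IsLeast (obj '' feasU) S' :=
    ⟨⟨V0, hV0mem, hobjV0⟩, by rintro _ ⟨V, hV, rfl⟩; exact hlb V hV⟩
  -- sign characterizations
  have hS'char : 0 ≤ S' ↔ ∀ z, d z < 0 → m z = 0 := by
    have hterms : ∀ z ∈ Finset.univ.filter (fun z => d z < 0), m z * d z ≤ 0 := by
      intro z hz
      rw [Finset.mem_filter] at hz
      exact mul_nonpos_of_nonneg_of_nonpos (hmnn z) (le_of_lt hz.2)
    constructor
    · intro h z hz
      have hle : S' ≤ 0 := hS' ▸ Finset.sum_nonpos hterms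
      have hzero : S' = 0 := le_antisymm hle h
      rw [hS'] at hzero
      have := (Finset.sum_eq_zero_iff_of_nonpos hterms).mp hzero z
        (Finset.mem_filter.mpr ⟨Finset.mem_univ z, hz⟩)
      rcases mul_eq_zero.mp this with h' | h'
      · exact h'
      · exact absurd h' (ne_of_lt hz)
    · intro h
      rw [hS']
      refine le_of_eq (Finset.sum_eq_zero fun z hz => ?_).symm
      rw [Finset.mem_filter] at hz
      rw [show PXZ 0 z ⊓ PXZ 1 z = m z from rfl, h z hz.2, zero_mul]
  have hSchar : 0 ≤ S ↔ ∀ z, d z < 0 → m z = 0 := by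
    have hterms : ∀ z ∈ Finset.univ.filter (fun z => d z < 0), c z * d z ≤ 0 := by
      intro z hz
      rw [Finset.mem_filter] at hz
      exact mul_nonpos_of_nonneg_of_nonpos (hcnn z) (le_of_lt hz.2)
    have hSc : S = ∑ z ∈ Finset.univ.filter (fun z => d z < 0), c z * d z := hS
    constructor
    · intro h z hz
      have hle : S ≤ 0 := hSc ▸ Finset.sum_nonpos hterms
      have hzero : S = 0 := le_antisymm hle h
      rw [hSc] at hzero
      have := (Finset.sum_eq_zero_iff_of_nonpos hterms).mp hzero z
        (Finset.mem_filter.mpr ⟨Finset.mem_univ z, hz⟩)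
      rcases mul_eq_zero.mp this with h' | h'
      · exact (hce z).mp h'
      · exact absurd h' (ne_of_lt hz)
    · intro h
      rw [hSc]
      refine le_of_eq (Finset.sum_eq_zero fun z hz => ?_).symm
      rw [Finset.mem_filter] at hz
      rw [(hce z).mpr (h z hz.2), zero_mul]
  have hTchar : (∀ z, 0 ≤ c z * d z) ↔ ∀ z, d z < 0 → m z = 0 := by
    constructor
    · intro h z hz
      have h1 := h z
      have h2 : c z * d z ≤ 0 := mul_nonpos_of_nonneg_of_nonpos (hcnn z) (le_of_lt hz)
      have : c z * d z = 0 := le_antisymm h2 h1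
      rcases mul_eq_zero.mp this with h' | h'
      · exact (hce z).mp h'
      · exact absurd h' (ne_of_lt hz)
    · intro h z
      by_cases hz : d z < 0
      · rw [(hce z).mpr (h z hz), zero_mul]
      · exact mul_nonneg (hcnn z) (not_lt.mp hz)
  refine ⟨hleast, hS'char.trans hSchar.symm, ?_⟩
  have : (∀ z, 0 ≤ PZ z * (PXZ 0 z / PZ z) * (PXZ 1 z / PZ z) * d z) ↔
      ∀ z, 0 ≤ c z * d z := Iff.rfl
  rw [this]
  exact hS'char.trans hTchar.symm
end
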